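/- Let G be a locally finite, connected graph, let β₁ be a k₁-bottleneck and β₂ a k₂-bottleneck in G (possibly β₁ = β₂). If s₁ ∈ β₁ crosses s₂ ∈ β₂, then at least three of the four corners of s₁ and s₂ have order ≤ max{k₁,k₂}. -/

import Mathlib

namespace LS

open SimpleGraph

variable {V : Type*}

/-- `(A, B)` is an (oriented) separation of `G`: the two sides cover `V`
and there is no edge between `A ∖ B` and `B ∖ A`. -/
def IsSep (G : SimpleGraph V) (A B : Set V) : Prop :=
  A ∪ B = Set.univ ∧ ∀ a ∈ A \ B, ∀ b ∈ B \ A, ¬G.Adj a b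

/-- `(A,B) ≥ (C,D)` for oriented separations, i.e. `A ⊆ C` and `B ⊇ D`. -/
def SepGE (s t : Set V × Set V) : Prop := s.1 ⊆ t.1 ∧ t.2 ⊆ s.2

/-- Two (unoriented) separations are nested if they have `≥`-comparable orientations. -/
def Nested (s t : Set V × Set V) : Prop :=
  SepGE s t ∨ SepGE s (t.2, t.1) ∨ SepGE (s.2, s.1) t ∨ SepGE (s.2, s.1) (t.2, t.1)

/-- Two separations cross if they are not nested. -/
def Crosses (s t : Set V × Set V) : Prop := ¬Nested s t

/-- The neighbourhood `N_G(K)` of a vertex set `K`. -/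
def nbhdSet (G : SimpleGraph V) (K : Set V) : Set V :=
  {v | v ∉ K ∧ ∃ u ∈ K, G.Adj u v}

/-- `K` is (the vertex set of) a connected component of the subgraph of `G` induced on `S`. -/
def IsCompOf (G : SimpleGraph V) (K S : Set V) : Prop :=
  K.Nonempty ∧ K ⊆ S ∧ (G.induce K).Connected ∧ ∀ a ∈ K, ∀ b ∈ S, G.Adj a b → b ∈ K

/-- `K` is a component of `G − X` that is tight at `X`, i.e. `N_G(K) = X`. -/
def TightCompAt (G : SimpleGraph V) (K X : Set V) : Prop :=
  IsCompOf G K Xᶜ ∧ nbhdSet G K = X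

/-- A separation `{A,B}` is tight if `G − (A ∩ B)` has tight components
contained in `A` and in `B`, respectively. -/
def TightSep (G : SimpleGraph V) (A B : Set V) : Prop :=
  (∃ K, TightCompAt G K (A ∩ B) ∧ K ⊆ A) ∧ ∃ K, TightCompAt G K (A ∩ B) ∧ K ⊆ B

/-- `X` is a tight separator: `G − X` has at least two components tight at `X`. -/
def TightSeparator (G : SimpleGraph V) (X : Set V) : Prop :=
  ∃ K₁ K₂, K₁ ≠ K₂ ∧ TightCompAt G K₁ X ∧ TightCompAt G K₂ X

/-- The set `E_G(S,T)` of edges of `G` with one end in `S` and the other in `T`. -/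
def edgesBetween (G : SimpleGraph V) (S T : Set V) : Set (Sym2 V) :=
  {e | ∃ u v, G.Adj u v ∧ e = s(u, v) ∧ u ∈ S ∧ v ∈ T}

/-- `∂X`: the set of edges of `G` with exactly one end in `X`. -/
def edgeBdry (G : SimpleGraph V) (X : Set V) : Set (Sym2 V) :=
  {e | ∃ u v, G.Adj u v ∧ e = s(u, v) ∧ u ∈ X ∧ v ∉ X}

/-- The separator of an oriented separation. -/
def tsSep (s : Set V × Set V) : Set V := s.1 ∩ s.2

/-- `p` lists the three distinct oriented separations of a ⊤-star. -/
def IsTStar (G : SimpleGraph V) (p : Fin 3 → Set V × Set V) : Prop :=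
  Function.Injective p ∧ (∀ i, IsSep G (p i).1 (p i).2) ∧
  (∀ i j, i ≠ j → Disjoint ((p i).1 \ (p i).2) ((p j).1 \ (p j).2)) ∧
  (⋃ i, ((p i).1 \ (p i).2)) = (⋃ i, tsSep (p i))ᶜ ∧
  ∀ i, ∀ v ∈ tsSep (p i), ∃ j, j ≠ i ∧ v ∈ tsSep (p j)

/-- The centre `Z` of a ⊤-star. -/
def tsCentre (p : Fin 3 → Set V × Set V) : Set V := ⋂ i, tsSep (p i)

/-- The `ij`-link `X_{ij}` of a ⊤-star. -/
def tsLink (p : Fin 3 → Set V × Set V) (i j : Fin 3) : Set V :=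
  (tsSep (p i) ∩ tsSep (p j)) \ tsCentre p

/-- The ⊤-star `p` is relevant with base `p 0`. -/
def RelevantTStar (G : SimpleGraph V) (p : Fin 3 → Set V × Set V) : Prop :=
  IsTStar G p ∧ TightSep G (p 0).1 (p 0).2 ∧
  ∀ x ∈ tsLink p 1 2, ∀ i : Fin 3, i ≠ 0 →
    (∃ y ∈ tsLink p 0 i, G.Adj x y) ∨
    ∃ y ∈ tsLink p 0 i ∪ tsCentre p, ∃ K, IsCompOf G K ((p i).1 \ (p i).2) ∧
      x ∈ nbhdSet G K ∧ y ∈ nbhdSet G K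

/-- A bottleneck of order `k` in `G`, encoded as a set of oriented separations
closed under reversal (representing a set of unoriented separations). -/
def IsBottleneck (G : SimpleGraph V) (k : ℕ) (β : Set (Set V × Set V)) : Prop :=
  β.Nonempty ∧ (∀ s ∈ β, (s.2, s.1) ∈ β) ∧
  (∀ s ∈ β, IsSep G s.1 s.2 ∧ TightSep G s.1 s.2 ∧ (s.1 ∩ s.2).encard = k) ∧
  ∀ p : Fin 3 → Set V × Set V, RelevantTStar G p →
    (∀ i, (tsSep (p i)).encard ≤ (k : ℕ∞)) → p 0 ∈ β → p 1 ∈ β ∨ p 2 ∈ β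

/-! ### Tangles -/

/-- A tangle of order `ℓ` in `G`. -/
def IsTangle (G : SimpleGraph V) (ℓ : ℕ) (τ : Set (Set V × Set V)) : Prop :=
  (∀ s ∈ τ, IsSep G s.1 s.2 ∧ (s.1 ∩ s.2).encard < (ℓ : ℕ∞)) ∧
  (∀ A B : Set V, IsSep G A B → (A ∩ B).encard < (ℓ : ℕ∞) → ((A, B) ∈ τ ∨ (B, A) ∈ τ)) ∧
  (∀ A B : Set V, (A, B) ∈ τ → (B, A) ∈ τ → A = B) ∧
  ∀ s₁ ∈ τ, ∀ s₂ ∈ τ, ∀ s₃ ∈ τ,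
    ¬(s₁.1 ∪ s₂.1 ∪ s₃.1 = Set.univ ∧
      ∀ u v : V, G.Adj u v →
        (u ∈ s₁.1 ∧ v ∈ s₁.1) ∨ (u ∈ s₂.1 ∧ v ∈ s₂.1) ∨ (u ∈ s₃.1 ∧ v ∈ s₃.1))

/-- The separation `{A,B}` distinguishes the tangles `τ` and `τ'`. -/
def DistinguishesT (τ τ' : Set (Set V × Set V)) (A B : Set V) : Prop :=
  ((A, B) ∈ τ ∧ (B, A) ∈ τ') ∨ ((B, A) ∈ τ ∧ (A, B) ∈ τ')

/-- The separation `{A,B}` distinguishes the vertex sets `Y` and `Z`. -/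
def DistSets (Y Z A B : Set V) : Prop :=
  (Y ⊆ A ∧ (Y ∩ (A \ B)).Nonempty ∧ Z ⊆ B ∧ (Z ∩ (B \ A)).Nonempty) ∨
  (Y ⊆ B ∧ (Y ∩ (B \ A)).Nonempty ∧ Z ⊆ A ∧ (Z ∩ (A \ B)).Nonempty)

/-! ### The construction of the nested sets `N^k(G)` -/

/-- `X^k`: the union of all `k`-bottlenecks in `G`. -/
def Xk (G : SimpleGraph V) (k : ℕ) : Set (Set V × Set V) :=
  {s | ∃ β, IsBottleneck G k β ∧ s ∈ β}

/-- `x^k(s)`: the number of separations in `X^k` that `s` crosses. -/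
noncomputable def xk (G : SimpleGraph V) (k : ℕ) (s : Set V × Set V) : ℕ :=
  {t ∈ Xk G k | Crosses s t}.ncard

/-- `N^k(G,β)` relative to a previously constructed set `M` of separations:
the elements of `β` nested with `M` that minimise `x^k` among those. -/
def NkOfBeta (G : SimpleGraph V) (M : Set (Set V × Set V)) (k : ℕ)
    (β : Set (Set V × Set V)) : Set (Set V × Set V) :=
  {s ∈ β | (∀ t ∈ M, Nested s t) ∧
    ∀ s' ∈ β, (∀ t ∈ M, Nested s' t) → xk G k s ≤ xk G k s'}

/-- `N^k(G)` relative to a previously constructed set `M`. -/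
def NkStep (G : SimpleGraph V) (M : Set (Set V × Set V)) (k : ℕ) :
    Set (Set V × Set V) :=
  {s | ∃ β, IsBottleneck G k β ∧ s ∈ NkOfBeta G M k β}

/-- `N^{<k}(G) = ⋃_{j<k} N^j(G)`. -/
noncomputable def Nlt (G : SimpleGraph V) : ℕ → Set (Set V × Set V)
  | 0 => ∅
  | k + 1 => Nlt G k ∪ NkStep G (Nlt G k) k

/-- `N^k(G)`. -/
noncomputable def Nk (G : SimpleGraph V) (k : ℕ) : Set (Set V × Set V) :=
  NkStep G (Nlt G k) k

/-- `N(G) = ⋃_k N^k(G)`. -/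
noncomputable def NSet (G : SimpleGraph V) : Set (Set V × Set V) :=
  ⋃ k, Nk G k

/-! ### Walks, local components and local separations -/

/-- An `X`-walk: a walk having precisely its first and last vertex in `X`. -/
def IsXWalk (G : SimpleGraph V) (X : Set V) {u v : V} (W : G.Walk u v) : Prop :=
  u ∈ X ∧ v ∈ X ∧ ∀ w ∈ W.support, w ∈ X → w = u ∨ w = v

/-- An `r`-local `X`-walk: an `X`-walk contained in a cycle of length `≤ r`,
or an `X`-walk consisting of a single `X`-edge. -/
def IsLocalXWalk (G : SimpleGraph V) (r : ℕ) (X : Set V) {u v : V} (W : G.Walk u v) :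
    Prop :=
  IsXWalk G X W ∧
  ((∃ (a : V) (C : G.Walk a a), C.IsCycle ∧ C.length ≤ r ∧ ∀ e ∈ W.edges, e ∈ C.edges) ∨
    W.length = 1)

/-- An `r`-local `X`-path. -/
def IsLocalXPath (G : SimpleGraph V) (r : ℕ) (X : Set V) {u v : V} (W : G.Walk u v) :
    Prop :=
  IsLocalXWalk G r X W ∧ W.IsPath

/-- Walks that are concatenations of `r`-local `X`-paths. -/
inductive ConcatLocalPaths (G : SimpleGraph V) (r : ℕ) (X : Set V) :
    ∀ {u v : V}, G.Walk u v → Prop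
  | single {u v : V} (W : G.Walk u v) (h : IsLocalXPath G r X W) :
      ConcatLocalPaths G r X W
  | comp {u v w : V} (W₁ : G.Walk u v) (W₂ : G.Walk v w)
      (h₁ : IsLocalXPath G r X W₁) (h₂ : ConcatLocalPaths G r X W₂) :
      ConcatLocalPaths G r X (W₁.append W₂)

/-- `W ∈ W_r(X)`: `W` is a concatenation of `r`-local `X`-paths repeating no vertex of `X`. -/
def MemWr (G : SimpleGraph V) (r : ℕ) (X : Set V) {u v : V} (W : G.Walk u v) : Prop :=
  ConcatLocalPaths G r X W ∧ ∀ x ∈ X, ¬W.support.Duplicate x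

/-- `X` is `r`-tomic: any two of its vertices are joined by a walk in `W_r(X)`. -/
def Rtomic (G : SimpleGraph V) (r : ℕ) (X : Set V) : Prop :=
  ∀ x ∈ X, ∀ y ∈ X, x ≠ y → ∃ W : G.Walk x y, MemWr G r X W

/-- One step of the relation generating the `r`-local components at `X`:
`e = f`, or `e` and `f` are the first and last edges of an `r`-local `X`-walk
(both required to lie in `∂X`). -/
def LocalEdgeStep (G : SimpleGraph V) (r : ℕ) (X : Set V) (e f : Sym2 V) : Prop :=
  e ∈ edgeBdry G X ∧ f ∈ edgeBdry G X ∧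
  (e = f ∨ ∃ (u v : V) (W : G.Walk u v), IsLocalXWalk G r X W ∧
      W.edges.head? = some e ∧ W.edges.getLast? = some f)

/-- `F` is an `r`-local component at `X`: an equivalence class of the transitive
closure of `LocalEdgeStep` on `∂X`. -/
def LocalCompAt (G : SimpleGraph V) (r : ℕ) (X : Set V) (F : Set (Sym2 V)) : Prop :=
  ∃ e ∈ edgeBdry G X, F = {f | Relation.ReflTransGen (LocalEdgeStep G r X) e f}

/-- An edge set `F` is tight with respect to `X` if every vertex of `X`
is incident with an edge of `F`. -/
def TightLocalComp (X : Set V) (F : Set (Sym2 V)) : Prop :=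
  ∀ x ∈ X, ∃ e ∈ F, x ∈ e

/-- `X` is a tight `r`-local separator: at least two tight `r`-local components at `X`. -/
def TightLocalSeparator (G : SimpleGraph V) (r : ℕ) (X : Set V) : Prop :=
  ∃ F₁ F₂, F₁ ≠ F₂ ∧ LocalCompAt G r X F₁ ∧ LocalCompAt G r X F₂ ∧
    TightLocalComp X F₁ ∧ TightLocalComp X F₂

/-- `(E₁, X, E₂)` is an (oriented) `r`-local separation of `G`. -/
def IsLocalSep (G : SimpleGraph V) (r : ℕ) (E₁ : Set (Sym2 V)) (X : Set V)
    (E₂ : Set (Sym2 V)) : Prop :=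
  Disjoint E₁ E₂ ∧ E₁ ∪ E₂ = edgeBdry G X ∧
    ∀ F, LocalCompAt G r X F → F ⊆ E₁ ∨ F ⊆ E₂

/-- A tight `r`-local separation: each side includes a tight `r`-local component at `X`. -/
def TightLocalSep (G : SimpleGraph V) (r : ℕ) (E₁ : Set (Sym2 V)) (X : Set V)
    (E₂ : Set (Sym2 V)) : Prop :=
  IsLocalSep G r E₁ X E₂ ∧
  (∃ F, LocalCompAt G r X F ∧ TightLocalComp X F ∧ F ⊆ E₁) ∧
  ∃ F, LocalCompAt G r X F ∧ TightLocalComp X F ∧ F ⊆ E₂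

/-- The oriented `r`-local separation `s_r` induced by the oriented separation
`s = (A₁, A₂)`: its separator is `X = A₁ ∩ A₂`, and its sides are
`E_i = E_G(A_i ∖ X, X)`. -/
def inducedLocal (G : SimpleGraph V) (s : Set V × Set V) :
    Set (Sym2 V) × Set V × Set (Sym2 V) :=
  (edgesBetween G (s.1 \ (s.1 ∩ s.2)) (s.1 ∩ s.2), s.1 ∩ s.2,
    edgesBetween G (s.2 \ (s.1 ∩ s.2)) (s.1 ∩ s.2))

/-- Some cycle of `G` of length `≤ r` alternates between the disjoint sets `X` and `Y`:
it visits four distinct vertices `x, y, x', y'` in this cyclic order with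
`x, x' ∈ X` and `y, y' ∈ Y`. -/
def Alternates (G : SimpleGraph V) (r : ℕ) (X Y : Set V) : Prop :=
  ∃ (a : V) (C : G.Walk a a), C.IsCycle ∧ C.length ≤ r ∧
    ∃ (x y x' y' : V) (l₁ l₂ l₃ l₄ l₅ : List V),
      x ∈ X ∧ x' ∈ X ∧ y ∈ Y ∧ y' ∈ Y ∧ x ≠ x' ∧ y ≠ y' ∧
      C.support = l₁ ++ x :: l₂ ++ y :: l₃ ++ x' :: l₄ ++ y' :: l₅

/-- `X` and `Y` are `r`-coupled. -/
def RCoupled (G : SimpleGraph V) (r : ℕ) (X Y : Set V) : Prop :=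
  (X ∩ Y).Nonempty ∨ (Disjoint X Y ∧ Alternates G r X Y)

/-- The `X`-link for the side `Fi` of an `r`-local separation with separator `Y`:
vertices `x ∈ X ∖ Y` from which some walk in `W_r(X)` visits `Y` with its first
edge in `∂Y` lying in `Fi`. -/
def LocalLink (G : SimpleGraph V) (r : ℕ) (X Y : Set V) (Fi : Set (Sym2 V)) : Set V :=
  {x | x ∈ X \ Y ∧ ∃ (z : V) (W : G.Walk x z), MemWr G r X W ∧
      (∃ y ∈ Y, y ∈ W.support) ∧
      ∃ (e : Sym2 V) (l₁ l₂ : List (Sym2 V)), W.edges = l₁ ++ e :: l₂ ∧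
        e ∈ edgeBdry G Y ∧ e ∈ Fi ∧ ∀ e' ∈ l₁, e' ∉ edgeBdry G Y}

/-- The `r`-local separations `{E₁,X,E₂}` and `{F₁,Y,F₂}` cross. -/
def LocalCrosses (G : SimpleGraph V) (r : ℕ) (E₁ : Set (Sym2 V)) (X : Set V)
    (E₂ : Set (Sym2 V)) (F₁ : Set (Sym2 V)) (Y : Set V) (F₂ : Set (Sym2 V)) : Prop :=
  RCoupled G r X Y ∧ ∀ i j : Bool,
    (LocalLink G r X Y (cond j F₁ F₂)).Nonempty ∨
    (LocalLink G r Y X (cond i E₁ E₂)).Nonempty ∨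
    ((cond i E₁ E₂) ∩ (cond j F₁ F₂) ∩ edgeBdry G (X ∩ Y)).Nonempty

/-- The edge set of a walk, as a set. -/
def walkEdgeSet {G : SimpleGraph V} {a b : V} (W : G.Walk a b) : Set (Sym2 V) :=
  {e | e ∈ W.edges}

/-- The binary cycle space of `G` is generated by the cycles of length `≤ r`:
the edge set of every cycle is a symmetric difference of edge sets of cycles
of length `≤ r`. -/
def CycleSpaceGenShort (G : SimpleGraph V) (r : ℕ) : Prop :=
  ∀ ⦃a : V⦄ (C : G.Walk a a), C.IsCycle →
    ∃ L : List ((b : V) × G.Walk b b),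
      (∀ p ∈ L, p.2.IsCycle ∧ p.2.length ≤ r) ∧
      walkEdgeSet C = L.foldr (fun p E => symmDiff (walkEdgeSet p.2) E) ∅

/-! ### Local ⊤-stars and local bottlenecks -/

/-- `q` lists the three oriented `r`-local separations of an `r`-local ⊤-star. -/
def IsLocalTStar (G : SimpleGraph V) (r : ℕ)
    (q : Fin 3 → Set (Sym2 V) × Set V × Set (Sym2 V)) : Prop :=
  Function.Injective q ∧
  (∀ i, IsLocalSep G r (q i).1 (q i).2.1 (q i).2.2) ∧
  (∀ i j, i ≠ j → Disjoint (q i).1 (q j).1) ∧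
  (⋃ i, (q i).1) = edgeBdry G (⋃ i, (q i).2.1) ∧
  (∀ i, ∀ v ∈ (q i).2.1, ∃ j, j ≠ i ∧ v ∈ (q j).2.1) ∧
  ∀ F, LocalCompAt G r (⋃ i, (q i).2.1) F → ∃ i, F ⊆ (q i).1

/-- The `r`-local ⊤-star `q` is relevant with base `q 0`. -/
def RelevantLocalTStar (G : SimpleGraph V) (r : ℕ)
    (q : Fin 3 → Set (Sym2 V) × Set V × Set (Sym2 V)) : Prop :=
  IsLocalTStar G r q ∧ TightLocalSep G r (q 0).1 (q 0).2.1 (q 0).2.2 ∧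
  ∀ x ∈ ((q 1).2.1 ∩ (q 2).2.1) \ ⋂ j, (q j).2.1, ∀ i : Fin 3, i ≠ 0 →
    (∃ y ∈ ((q 0).2.1 ∩ (q i).2.1) \ ⋂ j, (q j).2.1, G.Adj x y) ∨
    ∃ F, LocalCompAt G r (⋃ j, (q j).2.1) F ∧ F ⊆ (q i).1 ∧
      (∃ e ∈ F, x ∈ e) ∧ ∃ e ∈ F, ∃ y ∈ (q 0).2.1 ∩ (q i).2.1, y ∈ e

/-- An `r`-local bottleneck of order `k` in `G`, encoded as a set of oriented
`r`-local separations closed under reversal. -/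
def IsLocalBottleneck (G : SimpleGraph V) (r k : ℕ)
    (β : Set (Set (Sym2 V) × Set V × Set (Sym2 V))) : Prop :=
  β.Nonempty ∧ (∀ q ∈ β, (q.2.2, q.2.1, q.1) ∈ β) ∧
  (∀ q ∈ β, TightLocalSep G r q.1 q.2.1 q.2.2 ∧ q.2.1.encard = (k : ℕ∞)) ∧
  ∀ p : Fin 3 → Set (Sym2 V) × Set V × Set (Sym2 V), RelevantLocalTStar G r p →
    (∀ i, ((p i).2.1).encard ≤ (k : ℕ∞)) → p 0 ∈ β → p 1 ∈ β ∨ p 2 ∈ β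

/-! ### Auxiliary lemmas for Statement 6 -/

section Aux

variable {G : SimpleGraph V} {S T : Set V} {u : V}

lemma reachable_induce' :
    ∀ {a b : V} (W : G.Walk a b), (∀ x ∈ W.support, x ∈ S) →
      ∀ (ha : a ∈ S) (hb : b ∈ S), (G.induce S).Reachable ⟨a, ha⟩ ⟨b, hb⟩ := by
  intro a b W
  induction W with
  | nil => intro _ ha hb; exact Reachable.refl _
  | @cons a c b h W ih =>
    intro hsup ha hb
    have hc : c ∈ S := hsup c (by simp [Walk.support_cons])
    have h1 : (G.induce S).Adj ⟨a, ha⟩ ⟨c, hc⟩ := h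
    exact (h1.reachable).trans (ih (fun x hx => hsup x (by simp [Walk.support_cons, hx])) hc hb)

lemma walk_of_induce' :
    ∀ {a b : S} (_W : (G.induce S).Walk a b),
      ∃ W' : G.Walk a b, ∀ x ∈ W'.support, x ∈ S := by
  intro a b W
  induction W with
  | @nil u => exact ⟨Walk.nil, by rintro x hx; simp at hx; subst hx; exact u.2⟩
  | @cons a c b h W ih =>
    obtain ⟨W', hW'⟩ := ih
    refine ⟨Walk.cons (by exact h) W', ?_⟩
    intro x hx
    replace hx : x ∈ (a : V) :: W'.support := hx
    rcases List.mem_cons.1 hx with rfl | hx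
    · exact a.2
    · exact hW' x hx

/-- The vertex set of the component of `G[S]` containing `u`. -/
def compOf (G : SimpleGraph V) (S : Set V) (u : V) : Set V :=
  {w | ∃ W : G.Walk u w, ∀ x ∈ W.support, x ∈ S}

lemma mem_compOf_self (hu : u ∈ S) : u ∈ compOf G S u :=
  ⟨Walk.nil, by intro x hx; simp at hx; subst hx; exact hu⟩

lemma compOf_subset : compOf G S u ⊆ S := by
  rintro w ⟨W, hW⟩; exact hW w W.end_mem_support

lemma support_subset_compOf {w : V} (W : G.Walk u w) (hW : ∀ x ∈ W.support, x ∈ S) :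
    ∀ x ∈ W.support, x ∈ compOf G S u := by
  classical
  intro x hx
  exact ⟨W.takeUntil x hx, fun y hy => hW y (W.support_takeUntil_subset hx hy)⟩

lemma compOf_isCompOf (hu : u ∈ S) : IsCompOf G (compOf G S u) S := by
  refine ⟨⟨u, mem_compOf_self hu⟩, compOf_subset, ?_, ?_⟩
  · rw [connected_iff]
    refine ⟨?_, ⟨⟨u, mem_compOf_self hu⟩⟩⟩
    rintro ⟨x, hx⟩ ⟨y, hy⟩
    obtain ⟨Wx, hWx⟩ := hx
    obtain ⟨Wy, hWy⟩ := hy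
    have h1 := reachable_induce' Wx (support_subset_compOf Wx hWx) (mem_compOf_self hu)
      ⟨Wx, hWx⟩
    have h2 := reachable_induce' Wy (support_subset_compOf Wy hWy) (mem_compOf_self hu)
      ⟨Wy, hWy⟩
    exact h1.symm.trans h2
  · rintro a ⟨W, hW⟩ b hb hadj
    refine ⟨W.concat hadj, ?_⟩
    intro x hx
    rw [Walk.support_concat, List.mem_append] at hx
    rcases hx with h | h
    · exact hW x h
    · simp at h; subst h; exact hb

lemma exists_firstExit :
    ∀ {a b : V} (W : G.Walk a b), a ∉ T → b ∈ T →
      ∃ v' v : V, G.Adj v' v ∧ v ∈ T ∧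
        ∃ W' : G.Walk a v', ∀ x ∈ W'.support, x ∈ W.support ∧ x ∉ T := by
  intro a b W
  induction W with
  | nil => intro ha hb; exact absurd hb ha
  | @cons a c b h W ih =>
    intro ha hb
    by_cases hc : c ∈ T
    · refine ⟨a, c, h, hc, Walk.nil, ?_⟩
      intro x hx; simp at hx; subst hx
      exact ⟨by simp [Walk.support_cons], ha⟩
    · obtain ⟨v', v, hadj, hv, W', hW'⟩ := ih hc hb
      refine ⟨v', v, hadj, hv, Walk.cons h W', ?_⟩
      intro x hx
      rw [Walk.support_cons] at hx
      rcases List.mem_cons.1 hx with rfl | hx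
      · exact ⟨by simp [Walk.support_cons], ha⟩
      · obtain ⟨h1, h2⟩ := hW' x hx
        exact ⟨by simp [Walk.support_cons, h1], h2⟩

lemma iUnion_fin3 (f : Fin 3 → Set V) : (⋃ i, f i) = f 0 ∪ f 1 ∪ f 2 := by
  ext x
  simp only [Set.mem_iUnion, Set.mem_union]
  constructor
  · rintro ⟨i, hi⟩
    fin_cases i
    · exact Or.inl (Or.inl hi)
    · exact Or.inl (Or.inr hi)
    · exact Or.inr hi
  · rintro ((h | h) | h)
    exacts [⟨0, h⟩, ⟨1, h⟩, ⟨2, h⟩]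

lemma iInter_fin3 (f : Fin 3 → Set V) : (⋂ i, f i) = f 0 ∩ f 1 ∩ f 2 := by
  ext x
  simp only [Set.mem_iInter, Set.mem_inter_iff]
  constructor
  · intro h; exact ⟨⟨h 0, h 1⟩, h 2⟩
  · rintro ⟨⟨h0, h1⟩, h2⟩ i; fin_cases i <;> assumption

lemma IsSep.symm' {A B : Set V} (h : IsSep G A B) : IsSep G B A :=
  ⟨by rw [Set.union_comm]; exact h.1, fun a ha b hb hadj => h.2 b hb a ha hadj.symm⟩

lemma encard_union3 {X Y Z : Set V} (dXY : Disjoint X Y) (dXZ : Disjoint X Z)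
    (dYZ : Disjoint Y Z) :
    (X ∪ Y ∪ Z).encard = X.encard + Y.encard + Z.encard := by
  rw [Set.encard_union_eq (Set.disjoint_union_left.2 ⟨dXZ, dYZ⟩),
    Set.encard_union_eq dXY]

lemma encard_union_lt {P Q S X : Set V} (hX : X.encard ≠ ⊤) (hPX : P ⊆ X)
    (hQS : Q.encard < S.encard) (hS : S ⊆ X \ P) : (P ∪ Q).encard < X.encard := by
  have hPfin : P.encard ≠ ⊤ := fun h => hX (top_le_iff.1 (h ▸ Set.encard_mono hPX))
  have hsplit : X.encard = P.encard + (X \ P).encard := by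
    rw [← Set.encard_union_eq Set.disjoint_sdiff_right, Set.union_diff_cancel hPX]
  calc (P ∪ Q).encard ≤ P.encard + Q.encard := Set.encard_union_le _ _
    _ < P.encard + S.encard := WithTop.add_lt_add_left hPfin hQS
    _ ≤ P.encard + (X \ P).encard := add_le_add le_rfl (Set.encard_mono hS)
    _ = X.encard := hsplit.symm

end Aux

section Core

variable {G : SimpleGraph V}

lemma relHalf {A B C D : Set V} (hAB : IsSep G A B) (hCD : IsSep G C D)
    {KC : Set V} (hKC : TightCompAt G KC (C ∩ D)) (hKCsub : KC ⊆ C)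
    (hp : ((A ∩ C ∩ D) \ B).Nonempty)
    {x : V} (hx : x ∈ (B ∩ C ∩ D) \ A) :
    (∃ y ∈ (A ∩ B ∩ C) \ D, G.Adj x y) ∨
      ∃ y ∈ ((A ∩ B ∩ C) \ D) ∪ (A ∩ B ∩ (C ∩ D)),
        ∃ K, IsCompOf G K ((B ∩ C) \ (A ∪ D)) ∧ x ∈ nbhdSet G K ∧ y ∈ nbhdSet G K := by
  obtain ⟨⟨⟨hxB, hxC⟩, hxD⟩, hxnA⟩ := hx
  have hKCc : KC ⊆ (C ∩ D)ᶜ := hKC.1.2.1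
  have hKCnD : ∀ w ∈ KC, w ∉ D := fun w hw hwD => hKCc hw ⟨hKCsub hw, hwD⟩
  -- x is a neighbour of KC
  have hxN : x ∈ nbhdSet G KC := hKC.2.symm ▸ Set.mem_inter hxC hxD
  obtain ⟨hxnK, u, huK, hadjux⟩ := hxN
  have huC : u ∈ C := hKCsub huK
  have hunD : u ∈ Dᶜ := hKCnD u huK
  have hcovAB : ∀ v : V, v ∈ A ∨ v ∈ B := by
    intro v
    have : v ∈ A ∪ B := hAB.1.symm ▸ Set.mem_univ v
    exact this
  have hcovCD : ∀ v : V, v ∈ C ∨ v ∈ D := by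
    intro v
    have : v ∈ C ∪ D := hCD.1.symm ▸ Set.mem_univ v
    exact this
  by_cases huA : u ∈ A
  · by_cases huB : u ∈ B
    · -- u ∈ X₁ ∩ (C \ D): first alternative
      exact Or.inl ⟨u, ⟨⟨⟨huA, huB⟩, huC⟩, hunD⟩, hadjux.symm⟩
    · -- u ∈ A \ B adjacent to x ∈ B \ A: impossible
      exact absurd hadjux (hAB.2 u ⟨huA, huB⟩ x ⟨hxB, hxnA⟩)
  · -- main case : u ∈ (B ∩ C) \ (A ∪ D)
    have huB : u ∈ B := (hcovAB u).resolve_left huA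
    set R : Set V := (B ∩ C) \ (A ∪ D) with hR
    have huR : u ∈ R := ⟨⟨huB, huC⟩, fun h => h.elim huA hunD⟩
    -- KC meets A
    obtain ⟨w0, ⟨⟨hw0A, hw0C⟩, hw0D⟩, hw0nB⟩ := hp
    have hw0N : w0 ∈ nbhdSet G KC := hKC.2.symm ▸ Set.mem_inter hw0C hw0D
    obtain ⟨hw0nK, u0, hu0K, hadj0⟩ := hw0N
    have hu0A : u0 ∈ A := by
      by_contra hu0A
      have hu0B : u0 ∈ B := (hcovAB u0).resolve_left hu0A
      exact hAB.2 w0 ⟨hw0A, hw0nB⟩ u0 ⟨hu0B, hu0A⟩ hadj0.symm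
    -- a walk from u to u0 inside KC
    have hreach : (G.induce KC).Reachable ⟨u, huK⟩ ⟨u0, hu0K⟩ := by
      have hconn := hKC.1.2.2.1
      exact hconn.preconnected _ _
    obtain ⟨Wi⟩ := hreach
    obtain ⟨W, hWsup⟩ := walk_of_induce' Wi
    -- the first exit of this walk into A
    obtain ⟨v', v, hadj', hvA, W', hW'⟩ := exists_firstExit W huA hu0A
    have hW'R : ∀ t ∈ W'.support, t ∈ R := by
      intro t ht
      obtain ⟨ht1, ht2⟩ := hW' t ht
      have htK : t ∈ KC := hWsup t ht1
      have htB : t ∈ B := (hcovAB t).resolve_left ht2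
      exact ⟨⟨htB, hKCsub htK⟩, fun h => h.elim ht2 (hKCnD t htK)⟩
    have hv'R : v' ∈ R := hW'R v' W'.end_mem_support
    have hv'K : v' ∈ compOf G R u := ⟨W', hW'R⟩
    -- the vertex v lies in X₁ ∩ C
    have hvB : v ∈ B := by
      by_contra hvB
      exact hAB.2 v ⟨hvA, hvB⟩ v' ⟨hv'R.1.1, hv'R.2 ∘ Or.inl⟩ hadj'.symm
    have hvC : v ∈ C := by
      rcases hcovCD v with h | hvD
      · exact h
      · by_contra hvC
        exact hCD.2 v' ⟨hv'R.1.2, fun h => hv'R.2 (Or.inr h)⟩ v ⟨hvD, hvC⟩ hadj'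
    have hKsub : compOf G R u ⊆ R := compOf_subset
    have hxnK' : x ∉ compOf G R u := fun h => (hKsub h).2 (Or.inr hxD)
    have hvnK : v ∉ compOf G R u := fun h => (hKsub h).2 (Or.inl hvA)
    refine Or.inr ⟨v, ?_, compOf G R u, compOf_isCompOf huR,
      ⟨hxnK', u, mem_compOf_self huR, hadjux⟩, ⟨hvnK, v', hv'K, hadj'⟩⟩
    by_cases hvD : v ∈ D
    · exact Or.inr ⟨⟨hvA, hvB⟩, ⟨hvC, hvD⟩⟩
    · exact Or.inl ⟨⟨⟨hvA, hvB⟩, hvC⟩, hvD⟩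

end Core

section CoreLemma

variable {G : SimpleGraph V}

set_option maxHeartbeats 2000000 in
lemma core_contradiction {k₁ : ℕ} {β₁ : Set (Set V × Set V)} (hβ₁ : IsBottleneck G k₁ β₁)
    {A B C D : Set V} (h₁ : (A, B) ∈ β₁) (hCD : IsSep G C D) (htCD : TightSep G C D)
    (hp : ((A ∩ C ∩ D) \ B).Nonempty)
    (hqr : (((B ∩ C ∩ D) \ A)).encard < (((A ∩ B ∩ C) \ D)).encard)
    (hqs : (((B ∩ C ∩ D) \ A)).encard < (((A ∩ B ∩ D) \ C)).encard) : False := by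
  obtain ⟨hAB', htAB', hk'⟩ := hβ₁.2.2.1 _ h₁
  have hAB : IsSep G A B := hAB'
  have htAB : TightSep G A B := htAB'
  have hk : (A ∩ B).encard = (k₁ : ℕ∞) := hk'
  have hcovAB : ∀ v : V, v ∈ A ∨ v ∈ B := by
    intro v
    have h : v ∈ A ∪ B := by rw [hAB.1]; trivial
    exact h
  have hcovCD : ∀ v : V, v ∈ C ∨ v ∈ D := by
    intro v
    have h : v ∈ C ∪ D := by rw [hCD.1]; trivial
    exact h
  have hi3 : ∀ i : Fin 3, i = 0 ∨ i = 1 ∨ i = 2 := by decide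
  -- the ⊤-star
  set p : Fin 3 → Set V × Set V := ![(A, B), (B ∩ C, A ∪ D), (B ∩ D, A ∪ C)] with hpdef
  have hp0 : p 0 = (A, B) := rfl
  have hp1 : p 1 = (B ∩ C, A ∪ D) := rfl
  have hp2 : p 2 = (B ∩ D, A ∪ C) := rfl
  have hi0 : (p 0).1 \ (p 0).2 = A \ B := rfl
  have hi1 : (p 1).1 \ (p 1).2 = (B ∩ C) \ (A ∪ D) := rfl
  have hi2 : (p 2).1 \ (p 2).2 = (B ∩ D) \ (A ∪ C) := rfl
  have hsep0 : tsSep (p 0) = A ∩ B := rfl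
  have hsep1 : tsSep (p 1) = (B ∩ C) ∩ (A ∪ D) := rfl
  have hsep2 : tsSep (p 2) = (B ∩ D) ∩ (A ∪ C) := rfl
  have hcen : tsCentre p = A ∩ B ∩ (C ∩ D) := by
    rw [tsCentre, iInter_fin3, hsep0, hsep1, hsep2]
    ext v
    simp only [Set.mem_inter_iff, Set.mem_union]
    tauto
  have hl01 : tsLink p 0 1 = (A ∩ B ∩ C) \ D := by
    rw [tsLink, hcen, hsep0, hsep1]
    ext v
    simp only [Set.mem_diff, Set.mem_inter_iff, Set.mem_union]
    tauto
  have hl02 : tsLink p 0 2 = (A ∩ B ∩ D) \ C := by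
    rw [tsLink, hcen, hsep0, hsep2]
    ext v
    simp only [Set.mem_diff, Set.mem_inter_iff, Set.mem_union]
    tauto
  have hl12 : tsLink p 1 2 = (B ∩ C ∩ D) \ A := by
    rw [tsLink, hcen, hsep1, hsep2]
    ext v
    simp only [Set.mem_diff, Set.mem_inter_iff, Set.mem_union]
    tauto
  -- non-emptiness facts
  obtain ⟨KA, hKA, hKAsub⟩ := htAB.1
  obtain ⟨a0, ha0K⟩ := hKA.1.1
  have ha0 : a0 ∈ A \ B := by
    refine ⟨hKAsub ha0K, fun h => ?_⟩
    exact hKA.1.2.1 ha0K ⟨hKAsub ha0K, h⟩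
  have hRne : ((A ∩ B ∩ C) \ D).Nonempty := by
    rw [Set.nonempty_iff_ne_empty]
    intro h
    rw [h, Set.encard_empty] at hqr
    simp at hqr
  have hSne : ((A ∩ B ∩ D) \ C).Nonempty := by
    rw [Set.nonempty_iff_ne_empty]
    intro h
    rw [h, Set.encard_empty] at hqs
    simp at hqs
  obtain ⟨w1, hw1⟩ := hRne
  -- the three separations are distinct
  have hne01 : p 0 ≠ p 1 := by
    intro h
    have hA : A = B ∩ C := congrArg Prod.fst h
    exact ha0.2 (hA ▸ ha0.1).1
  have hne02 : p 0 ≠ p 2 := by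
    intro h
    have hA : A = B ∩ D := congrArg Prod.fst h
    exact ha0.2 (hA ▸ ha0.1).1
  have hne12 : p 1 ≠ p 2 := by
    intro h
    have hBC : B ∩ C = B ∩ D := congrArg Prod.fst h
    have : w1 ∈ B ∩ D := hBC ▸ ⟨hw1.1.1.2, hw1.1.2⟩
    exact hw1.2 this.2
  have hinj : Function.Injective p := by
    intro i j h
    rcases hi3 i with rfl | rfl | rfl <;> rcases hi3 j with rfl | rfl | rfl <;>
      first
        | rfl
        | exact absurd h hne01 | exact absurd h hne02 | exact absurd h hne12
        | exact absurd h.symm hne01 | exact absurd h.symm hne02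
        | exact absurd h.symm hne12
  -- each constituent is a separation
  have hsepP1 : IsSep G (B ∩ C) (A ∪ D) := by
    constructor
    · ext v
      simp only [Set.mem_union, Set.mem_inter_iff, Set.mem_univ, iff_true]
      rcases hcovAB v with h | h
      · tauto
      · rcases hcovCD v with h' | h' <;> tauto
    · rintro a ⟨⟨haB, haC⟩, ha2⟩ b ⟨hb1, hb2⟩ hadj
      have hanA : a ∉ A := fun h => ha2 (Or.inl h)
      have hanD : a ∉ D := fun h => ha2 (Or.inr h)
      by_cases hbA : b ∈ A
      · by_cases hbB : b ∈ B
        · have hbnC : b ∉ C := fun h => hb2 ⟨hbB, h⟩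
          have hbD : b ∈ D := (hcovCD b).resolve_left hbnC
          exact hCD.2 a ⟨haC, hanD⟩ b ⟨hbD, hbnC⟩ hadj
        · exact hAB.2 b ⟨hbA, hbB⟩ a ⟨haB, hanA⟩ hadj.symm
      · have hbD : b ∈ D := hb1.resolve_left hbA
        have hbB : b ∈ B := (hcovAB b).resolve_left hbA
        have hbnC : b ∉ C := fun h => hb2 ⟨hbB, h⟩
        exact hCD.2 a ⟨haC, hanD⟩ b ⟨hbD, hbnC⟩ hadj
  have hsepP2 : IsSep G (B ∩ D) (A ∪ C) := by
    constructor
    · ext v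
      simp only [Set.mem_union, Set.mem_inter_iff, Set.mem_univ, iff_true]
      rcases hcovAB v with h | h
      · tauto
      · rcases hcovCD v with h' | h' <;> tauto
    · rintro a ⟨⟨haB, haD⟩, ha2⟩ b ⟨hb1, hb2⟩ hadj
      have hanA : a ∉ A := fun h => ha2 (Or.inl h)
      have hanC : a ∉ C := fun h => ha2 (Or.inr h)
      by_cases hbA : b ∈ A
      · by_cases hbB : b ∈ B
        · have hbnD : b ∉ D := fun h => hb2 ⟨hbB, h⟩
          have hbC : b ∈ C := (hcovCD b).resolve_right hbnD
          exact hCD.2 b ⟨hbC, hbnD⟩ a ⟨haD, hanC⟩ hadj.symm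
        · exact hAB.2 b ⟨hbA, hbB⟩ a ⟨haB, hanA⟩ hadj.symm
      · have hbC : b ∈ C := hb1.resolve_left hbA
        have hbB : b ∈ B := (hcovAB b).resolve_left hbA
        have hbnD : b ∉ D := fun h => hb2 ⟨hbB, h⟩
        exact hCD.2 b ⟨hbC, hbnD⟩ a ⟨haD, hanC⟩ hadj.symm
  have hseps : ∀ i, IsSep G (p i).1 (p i).2 := by
    intro i
    rcases hi3 i with rfl | rfl | rfl
    · exact hAB
    · exact hsepP1
    · exact hsepP2
  -- disjointness of the interiors
  have hd01 : Disjoint ((p 0).1 \ (p 0).2) ((p 1).1 \ (p 1).2) := by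
    rw [Set.disjoint_left]
    rintro v ⟨hvA, hvB⟩ ⟨⟨hvB', _⟩, _⟩
    exact hvB hvB'
  have hd02 : Disjoint ((p 0).1 \ (p 0).2) ((p 2).1 \ (p 2).2) := by
    rw [Set.disjoint_left]
    rintro v ⟨hvA, hvB⟩ ⟨⟨hvB', _⟩, _⟩
    exact hvB hvB'
  have hd12 : Disjoint ((p 1).1 \ (p 1).2) ((p 2).1 \ (p 2).2) := by
    rw [Set.disjoint_left]
    rintro v ⟨_, hv2⟩ ⟨⟨_, hvD⟩, _⟩
    exact hv2 (Or.inr hvD)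
  have hdisj : ∀ i j, i ≠ j → Disjoint ((p i).1 \ (p i).2) ((p j).1 \ (p j).2) := by
    intro i j hij
    rcases hi3 i with rfl | rfl | rfl <;> rcases hi3 j with rfl | rfl | rfl <;>
      first
        | exact absurd rfl hij
        | exact hd01 | exact hd02 | exact hd12
        | exact hd01.symm | exact hd02.symm | exact hd12.symm
  -- union of the interiors
  have hunion : (⋃ i, ((p i).1 \ (p i).2)) = (⋃ i, tsSep (p i))ᶜ := by
    rw [iUnion_fin3, iUnion_fin3, hsep0, hsep1, hsep2, hi0, hi1, hi2]
    ext v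
    simp only [Set.mem_union, Set.mem_diff, Set.mem_compl_iff, Set.mem_inter_iff]
    rcases hcovAB v with h | h <;> rcases hcovCD v with h' | h' <;> tauto
  -- every separator vertex lies in another separator
  have hsepcov : ∀ i, ∀ v ∈ tsSep (p i), ∃ j, j ≠ i ∧ v ∈ tsSep (p j) := by
    intro i
    rcases hi3 i with rfl | rfl | rfl
    · intro v hv
      rw [hsep0] at hv
      rcases hcovCD v with h | h
      · exact ⟨1, by decide, by rw [hsep1]; exact ⟨⟨hv.2, h⟩, Or.inl hv.1⟩⟩
      · exact ⟨2, by decide, by rw [hsep2]; exact ⟨⟨hv.2, h⟩, Or.inl hv.1⟩⟩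
    · intro v hv
      rw [hsep1] at hv
      rcases hv.2 with h | h
      · exact ⟨0, by decide, by rw [hsep0]; exact ⟨h, hv.1.1⟩⟩
      · exact ⟨2, by decide, by rw [hsep2]; exact ⟨⟨hv.1.1, h⟩, Or.inr hv.1.2⟩⟩
    · intro v hv
      rw [hsep2] at hv
      rcases hv.2 with h | h
      · exact ⟨0, by decide, by rw [hsep0]; exact ⟨h, hv.1.1⟩⟩
      · exact ⟨1, by decide, by rw [hsep1]; exact ⟨⟨hv.1.1, h⟩, Or.inr hv.1.2⟩⟩
  have hstar : IsTStar G p := ⟨hinj, hseps, hdisj, hunion, hsepcov⟩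
  -- relevance
  obtain ⟨⟨KC, hKC, hKCsub⟩, ⟨KD, hKD, hKDsub⟩⟩ := htCD
  have hrel : RelevantTStar G p := by
    refine ⟨hstar, htAB, ?_⟩
    intro x hx i hi
    rw [hl12] at hx
    rcases hi3 i with rfl | rfl | rfl
    · exact absurd rfl hi
    · -- i = 1, use KC
      rcases relHalf hAB hCD hKC hKCsub hp hx with ⟨y, hy, hadj⟩ | ⟨y, hy, K, hK⟩
      · exact Or.inl ⟨y, by rw [hl01]; exact hy, hadj⟩
      · refine Or.inr ⟨y, ?_, K, hK⟩
        rw [hl01, hcen]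
        exact hy
    · -- i = 2, use KD; swap the roles of C and D
      have hCD' : IsSep G D C := hCD.symm'
      have hKD' : TightCompAt G KD (D ∩ C) := by rwa [Set.inter_comm D C]
      have hp' : ((A ∩ D ∩ C) \ B).Nonempty := by rwa [Set.inter_right_comm]
      have hx' : x ∈ (B ∩ D ∩ C) \ A := by
        rw [Set.inter_right_comm]
        exact hx
      rcases relHalf hAB hCD' hKD' hKDsub hp' hx' with ⟨y, hy, hadj⟩ | ⟨y, hy, K, hK⟩
      · exact Or.inl ⟨y, by rw [hl02]; exact hy, hadj⟩
      · refine Or.inr ⟨y, ?_, K, hK⟩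
        rw [hl02, hcen, Set.inter_comm C D]
        exact hy
  -- order bounds
  have hfin : (A ∩ B).encard ≠ ⊤ := by
    rw [hk]
    exact (WithTop.coe_lt_top k₁).ne
  have he1 : tsSep (p 1) = (A ∩ B ∩ C) ∪ ((B ∩ C ∩ D) \ A) := by
    rw [hsep1]
    ext v
    simp only [Set.mem_union, Set.mem_inter_iff, Set.mem_diff]
    rcases hcovCD v with h | h <;> tauto
  have he2 : tsSep (p 2) = (A ∩ B ∩ D) ∪ ((B ∩ C ∩ D) \ A) := by
    rw [hsep2]
    ext v
    simp only [Set.mem_union, Set.mem_inter_iff, Set.mem_diff]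
    rcases hcovCD v with h | h <;> tauto
  have hlt1 : (tsSep (p 1)).encard < (A ∩ B).encard := by
    rw [he1]
    refine encard_union_lt hfin Set.inter_subset_left hqs ?_
    rintro v ⟨⟨⟨hvA, hvB⟩, hvD⟩, hvC⟩
    exact ⟨⟨hvA, hvB⟩, fun h => hvC h.2⟩
  have hlt2 : (tsSep (p 2)).encard < (A ∩ B).encard := by
    rw [he2]
    refine encard_union_lt hfin Set.inter_subset_left hqr ?_
    rintro v ⟨⟨⟨hvA, hvB⟩, hvC⟩, hvD⟩
    exact ⟨⟨hvA, hvB⟩, fun h => hvD h.2⟩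
  have horder : ∀ i, (tsSep (p i)).encard ≤ (k₁ : ℕ∞) := by
    intro i
    rcases hi3 i with rfl | rfl | rfl
    · exact le_of_eq (by rw [hsep0, hk])
    · exact le_of_lt (by rw [← hk]; exact hlt1)
    · exact le_of_lt (by rw [← hk]; exact hlt2)
  -- apply the bottleneck property
  rcases hβ₁.2.2.2 p hrel horder h₁ with h | h
  · have := (hβ₁.2.2.1 _ h).2.2
    rw [← hk] at this
    exact absurd this (ne_of_lt hlt1)
  · have := (hβ₁.2.2.1 _ h).2.2
    rw [← hk] at this
    exact absurd this (ne_of_lt hlt2)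

end CoreLemma

section MainAux

variable {G : SimpleGraph V}

lemma encard_toNat {s : Set V} (h : s.Finite) : ∃ n : ℕ, s.encard = n := by
  obtain ⟨n, hn⟩ := WithTop.ne_top_iff_exists.1 h.encard_lt_top.ne
  exact ⟨n, hn.symm⟩

lemma nonempty_of_encard_eq_pos {s : Set V} {n : ℕ} (h : s.encard = n) (hn : 0 < n) :
    s.Nonempty := by
  apply Set.nonempty_of_encard_ne_zero
  rw [h]
  exact_mod_cast hn.ne'

end MainAux

set_option maxHeartbeats 4000000

/-- If `s₁ ∈ β₁` crosses `s₂ ∈ β₂` for bottlenecks `β₁, β₂` of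
orders `k₁, k₂` in a locally finite connected graph, then at least three of the
four corners have order `≤ max {k₁, k₂}`. -/
theorem statement6 {V : Type*} (G : SimpleGraph V)
    (hlf : ∀ v : V, (G.neighborSet v).Finite) (hG : G.Connected)
    (k₁ k₂ : ℕ) (β₁ β₂ : Set (Set V × Set V))
    (hβ₁ : IsBottleneck G k₁ β₁) (hβ₂ : IsBottleneck G k₂ β₂)
    (A B C D : Set V) (h₁ : (A, B) ∈ β₁) (h₂ : (C, D) ∈ β₂)
    (hcross : Crosses (A, B) (C, D)) :
    (((A ∩ C) ∩ (B ∪ D)).encard ≤ (max k₁ k₂ : ℕ∞) ∧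
     ((A ∩ D) ∩ (B ∪ C)).encard ≤ (max k₁ k₂ : ℕ∞) ∧
     ((B ∩ D) ∩ (A ∪ C)).encard ≤ (max k₁ k₂ : ℕ∞)) ∨
    (((A ∩ C) ∩ (B ∪ D)).encard ≤ (max k₁ k₂ : ℕ∞) ∧
     ((A ∩ D) ∩ (B ∪ C)).encard ≤ (max k₁ k₂ : ℕ∞) ∧
     ((B ∩ C) ∩ (A ∪ D)).encard ≤ (max k₁ k₂ : ℕ∞)) ∨
    (((A ∩ C) ∩ (B ∪ D)).encard ≤ (max k₁ k₂ : ℕ∞) ∧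
     ((B ∩ D) ∩ (A ∪ C)).encard ≤ (max k₁ k₂ : ℕ∞) ∧
     ((B ∩ C) ∩ (A ∪ D)).encard ≤ (max k₁ k₂ : ℕ∞)) ∨
    (((A ∩ D) ∩ (B ∪ C)).encard ≤ (max k₁ k₂ : ℕ∞) ∧
     ((B ∩ D) ∩ (A ∪ C)).encard ≤ (max k₁ k₂ : ℕ∞) ∧
     ((B ∩ C) ∩ (A ∪ D)).encard ≤ (max k₁ k₂ : ℕ∞)) := by
  obtain ⟨hABsep', hABtight', hk1'⟩ := hβ₁.2.2.1 _ h₁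
  have hABsep : IsSep G A B := hABsep'
  have hABtight : TightSep G A B := hABtight'
  have hk1 : (A ∩ B).encard = (k₁ : ℕ∞) := hk1'
  obtain ⟨hCDsep', hCDtight', hk2'⟩ := hβ₂.2.2.1 _ h₂
  have hCDsep : IsSep G C D := hCDsep'
  have hCDtight : TightSep G C D := hCDtight'
  have hk2 : (C ∩ D).encard = (k₂ : ℕ∞) := hk2'
  have hcovAB : ∀ v : V, v ∈ A ∨ v ∈ B := by
    intro v
    have h : v ∈ A ∪ B := by rw [hABsep.1]; trivial
    exact h
  have hcovCD : ∀ v : V, v ∈ C ∨ v ∈ D := by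
    intro v
    have h : v ∈ C ∪ D := by rw [hCDsep.1]; trivial
    exact h
  have hfin1 : (A ∩ B).Finite := Set.finite_of_encard_eq_coe hk1
  have hfin2 : (C ∩ D).Finite := Set.finite_of_encard_eq_coe hk2
  -- the five cells
  obtain ⟨z, hz⟩ := encard_toNat (hfin1.subset (Set.inter_subset_left :
    A ∩ B ∩ (C ∩ D) ⊆ A ∩ B))
  obtain ⟨r, hr⟩ := encard_toNat (hfin1.subset
    (fun x hx => hx.1.1 : (A ∩ B ∩ C) \ D ⊆ A ∩ B))
  obtain ⟨s, hs⟩ := encard_toNat (hfin1.subset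
    (fun x hx => hx.1.1 : (A ∩ B ∩ D) \ C ⊆ A ∩ B))
  obtain ⟨pn, hpn⟩ := encard_toNat (hfin2.subset
    (fun x hx => ⟨hx.1.1.2, hx.1.2⟩ : (A ∩ C ∩ D) \ B ⊆ C ∩ D))
  obtain ⟨q, hq⟩ := encard_toNat (hfin2.subset
    (fun x hx => ⟨hx.1.1.2, hx.1.2⟩ : (B ∩ C ∩ D) \ A ⊆ C ∩ D))
  -- disjointness of the cells
  have dZR : Disjoint (A ∩ B ∩ (C ∩ D)) ((A ∩ B ∩ C) \ D) := by
    rw [Set.disjoint_left]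
    rintro x ⟨-, -, hD⟩ ⟨-, hnD⟩
    exact hnD hD
  have dZS : Disjoint (A ∩ B ∩ (C ∩ D)) ((A ∩ B ∩ D) \ C) := by
    rw [Set.disjoint_left]
    rintro x ⟨-, hC, -⟩ ⟨-, hnC⟩
    exact hnC hC
  have dZP : Disjoint (A ∩ B ∩ (C ∩ D)) ((A ∩ C ∩ D) \ B) := by
    rw [Set.disjoint_left]
    rintro x ⟨⟨-, hB⟩, -⟩ ⟨-, hnB⟩
    exact hnB hB
  have dZQ : Disjoint (A ∩ B ∩ (C ∩ D)) ((B ∩ C ∩ D) \ A) := by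
    rw [Set.disjoint_left]
    rintro x ⟨⟨hA, -⟩, -⟩ ⟨-, hnA⟩
    exact hnA hA
  have dRS : Disjoint ((A ∩ B ∩ C) \ D) ((A ∩ B ∩ D) \ C) := by
    rw [Set.disjoint_left]
    rintro x ⟨⟨-, hC⟩, -⟩ ⟨-, hnC⟩
    exact hnC hC
  have dRP : Disjoint ((A ∩ B ∩ C) \ D) ((A ∩ C ∩ D) \ B) := by
    rw [Set.disjoint_left]
    rintro x ⟨⟨⟨-, hB⟩, -⟩, -⟩ ⟨-, hnB⟩
    exact hnB hB
  have dRQ : Disjoint ((A ∩ B ∩ C) \ D) ((B ∩ C ∩ D) \ A) := by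
    rw [Set.disjoint_left]
    rintro x ⟨⟨⟨hA, -⟩, -⟩, -⟩ ⟨-, hnA⟩
    exact hnA hA
  have dSP : Disjoint ((A ∩ B ∩ D) \ C) ((A ∩ C ∩ D) \ B) := by
    rw [Set.disjoint_left]
    rintro x ⟨⟨⟨-, hB⟩, -⟩, -⟩ ⟨-, hnB⟩
    exact hnB hB
  have dSQ : Disjoint ((A ∩ B ∩ D) \ C) ((B ∩ C ∩ D) \ A) := by
    rw [Set.disjoint_left]
    rintro x ⟨⟨⟨hA, -⟩, -⟩, -⟩ ⟨-, hnA⟩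
    exact hnA hA
  have dPQ : Disjoint ((A ∩ C ∩ D) \ B) ((B ∩ C ∩ D) \ A) := by
    rw [Set.disjoint_left]
    rintro x ⟨⟨⟨hA, -⟩, -⟩, -⟩ ⟨-, hnA⟩
    exact hnA hA
  -- decompositions of the separators and corner separators
  have hX1eq : A ∩ B = A ∩ B ∩ (C ∩ D) ∪ (A ∩ B ∩ C) \ D ∪ (A ∩ B ∩ D) \ C := by
    ext x
    simp only [Set.mem_union, Set.mem_inter_iff, Set.mem_diff]
    rcases hcovCD x with h | h <;> tauto
  have hX2eq : C ∩ D = A ∩ B ∩ (C ∩ D) ∪ (A ∩ C ∩ D) \ B ∪ (B ∩ C ∩ D) \ A := by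
    ext x
    simp only [Set.mem_union, Set.mem_inter_iff, Set.mem_diff]
    rcases hcovAB x with h | h <;> tauto
  have hc1eq : A ∩ C ∩ (B ∪ D) = A ∩ B ∩ (C ∩ D) ∪ (A ∩ B ∩ C) \ D ∪ (A ∩ C ∩ D) \ B := by
    ext x
    simp only [Set.mem_union, Set.mem_inter_iff, Set.mem_diff]
    tauto
  have hc2eq : A ∩ D ∩ (B ∪ C) = A ∩ B ∩ (C ∩ D) ∪ (A ∩ B ∩ D) \ C ∪ (A ∩ C ∩ D) \ B := by
    ext x
    simp only [Set.mem_union, Set.mem_inter_iff, Set.mem_diff]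
    tauto
  have hc3eq : B ∩ D ∩ (A ∪ C) = A ∩ B ∩ (C ∩ D) ∪ (A ∩ B ∩ D) \ C ∪ (B ∩ C ∩ D) \ A := by
    ext x
    simp only [Set.mem_union, Set.mem_inter_iff, Set.mem_diff]
    tauto
  have hc4eq : B ∩ C ∩ (A ∪ D) = A ∩ B ∩ (C ∩ D) ∪ (A ∩ B ∩ C) \ D ∪ (B ∩ C ∩ D) \ A := by
    ext x
    simp only [Set.mem_union, Set.mem_inter_iff, Set.mem_diff]
    tauto
  -- numeric identities
  have hk1n : z + r + s = k₁ := by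
    have h := hk1
    rw [hX1eq, encard_union3 dZR dZS dRS, hz, hr, hs] at h
    exact_mod_cast h
  have hk2n : z + pn + q = k₂ := by
    have h := hk2
    rw [hX2eq, encard_union3 dZP dZQ dPQ, hz, hpn, hq] at h
    exact_mod_cast h
  have hc1 : (A ∩ C ∩ (B ∪ D)).encard = ((z + r + pn : ℕ) : ℕ∞) := by
    rw [hc1eq, encard_union3 dZR dZP dRP, hz, hr, hpn]
    push_cast
    ring
  have hc2 : (A ∩ D ∩ (B ∪ C)).encard = ((z + s + pn : ℕ) : ℕ∞) := by
    rw [hc2eq, encard_union3 dZS dZP dSP, hz, hs, hpn]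
    push_cast
    ring
  have hc3 : (B ∩ D ∩ (A ∪ C)).encard = ((z + s + q : ℕ) : ℕ∞) := by
    rw [hc3eq, encard_union3 dZS dZQ dSQ, hz, hs, hq]
    push_cast
    ring
  have hc4 : (B ∩ C ∩ (A ∪ D)).encard = ((z + r + q : ℕ) : ℕ∞) := by
    rw [hc4eq, encard_union3 dZR dZQ dRQ, hz, hr, hq]
    push_cast
    ring
  -- the four impossible patterns
  have F1 : ¬(q < r ∧ q < s ∧ 0 < pn) := by
    rintro ⟨ha, hb, hc⟩
    refine core_contradiction hβ₁ h₁ hCDsep hCDtight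
      (nonempty_of_encard_eq_pos hpn hc) ?_ ?_
    · rw [hq, hr]; exact_mod_cast ha
    · rw [hq, hs]; exact_mod_cast hb
  have F2 : ¬(pn < r ∧ pn < s ∧ 0 < q) := by
    rintro ⟨ha, hb, hc⟩
    have e1 : (B ∩ A ∩ C) \ D = (A ∩ B ∩ C) \ D := by rw [Set.inter_comm B A]
    have e2 : (B ∩ A ∩ D) \ C = (A ∩ B ∩ D) \ C := by rw [Set.inter_comm B A]
    have e3 : (B ∩ C ∩ D) \ A = (B ∩ C ∩ D) \ A := rfl
    refine core_contradiction hβ₁ (hβ₁.2.1 _ h₁) hCDsep hCDtight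
      (nonempty_of_encard_eq_pos hq hc) ?_ ?_
    · rw [e1, hpn, hr]; exact_mod_cast ha
    · rw [e2, hpn, hs]; exact_mod_cast hb
  have F3 : ¬(s < pn ∧ s < q ∧ 0 < r) := by
    rintro ⟨ha, hb, hc⟩
    have e1 : (C ∩ A ∩ B) \ D = (A ∩ B ∩ C) \ D := by
      ext x
      simp only [Set.mem_inter_iff, Set.mem_diff]
      tauto
    have e2 : (D ∩ A ∩ B) \ C = (A ∩ B ∩ D) \ C := by
      ext x
      simp only [Set.mem_inter_iff, Set.mem_diff]
      tauto
    have e3 : (C ∩ D ∩ A) \ B = (A ∩ C ∩ D) \ B := by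
      ext x
      simp only [Set.mem_inter_iff, Set.mem_diff]
      tauto
    have e4 : (C ∩ D ∩ B) \ A = (B ∩ C ∩ D) \ A := by
      ext x
      simp only [Set.mem_inter_iff, Set.mem_diff]
      tauto
    refine core_contradiction hβ₂ h₂ hABsep hABtight ?_ ?_ ?_
    · rw [e1]; exact nonempty_of_encard_eq_pos hr hc
    · rw [e2, e3, hs, hpn]; exact_mod_cast ha
    · rw [e2, e4, hs, hq]; exact_mod_cast hb
  have F4 : ¬(r < pn ∧ r < q ∧ 0 < s) := by
    rintro ⟨ha, hb, hc⟩
    have e1 : (D ∩ A ∩ B) \ C = (A ∩ B ∩ D) \ C := by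
      ext x
      simp only [Set.mem_inter_iff, Set.mem_diff]
      tauto
    have e2 : (C ∩ A ∩ B) \ D = (A ∩ B ∩ C) \ D := by
      ext x
      simp only [Set.mem_inter_iff, Set.mem_diff]
      tauto
    have e3 : (D ∩ C ∩ A) \ B = (A ∩ C ∩ D) \ B := by
      ext x
      simp only [Set.mem_inter_iff, Set.mem_diff]
      tauto
    have e4 : (D ∩ C ∩ B) \ A = (B ∩ C ∩ D) \ A := by
      ext x
      simp only [Set.mem_inter_iff, Set.mem_diff]
      tauto
    refine core_contradiction hβ₂ (hβ₂.2.1 _ h₂) hABsep hABtight ?_ ?_ ?_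
    · rw [e1]; exact nonempty_of_encard_eq_pos hs hc
    · rw [e2, e3, hr, hpn]; exact_mod_cast ha
    · rw [e2, e4, hr, hq]; exact_mod_cast hb
  -- the numeric conclusion
  obtain ⟨m, hm⟩ : ∃ m : ℕ, m = max k₁ k₂ := ⟨_, rfl⟩
  have hm1 : k₁ ≤ m := hm ▸ le_max_left _ _
  have hm2 : k₂ ≤ m := hm ▸ le_max_right _ _
  have hm3 : m = k₁ ∨ m = k₂ := hm ▸ max_choice _ _
  have main : (z + r + pn ≤ m ∧ z + s + pn ≤ m ∧ z + s + q ≤ m) ∨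
      (z + r + pn ≤ m ∧ z + s + pn ≤ m ∧ z + r + q ≤ m) ∨
      (z + r + pn ≤ m ∧ z + s + q ≤ m ∧ z + r + q ≤ m) ∨
      (z + s + pn ≤ m ∧ z + s + q ≤ m ∧ z + r + q ≤ m) := by
    omega
  have key : ∀ n : ℕ, n ≤ m → ((n : ℕ∞) ≤ (max k₁ k₂ : ℕ∞)) := by
    intro n hn
    rcases hm3 with h | h
    · exact le_trans (Nat.cast_le.mpr (hn.trans_eq h)) (le_max_left _ _)
    · exact le_trans (Nat.cast_le.mpr (hn.trans_eq h)) (le_max_right _ _)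
  rcases main with ⟨g1, g2, g3⟩ | ⟨g1, g2, g3⟩ | ⟨g1, g2, g3⟩ | ⟨g1, g2, g3⟩
  · exact Or.inl ⟨by rw [hc1]; exact key _ g1,
      by rw [hc2]; exact key _ g2, by rw [hc3]; exact key _ g3⟩
  · exact Or.inr (Or.inl ⟨by rw [hc1]; exact key _ g1,
      by rw [hc2]; exact key _ g2, by rw [hc4]; exact key _ g3⟩)
  · exact Or.inr (Or.inr (Or.inl ⟨by rw [hc1]; exact key _ g1,
      by rw [hc3]; exact key _ g2, by rw [hc4]; exact key _ g3⟩))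
  · exact Or.inr (Or.inr (Or.inr ⟨by rw [hc2]; exact key _ g1,
      by rw [hc3]; exact key _ g2, by rw [hc4]; exact key _ g3⟩))

end LS
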